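/- arXiv:1801.04803 — 2 statements merged into one kernel-verified Lean document; each statement's English description precedes it below -/
import Mathlib

section
/- Let q be a prime power and let v, d, k be integers with d even, 2 ≤ d/2 ≤ k ≤ v/2 and k < d. Let C be a (v,#C,d;k)_q constant dimension code that contains a (v,d;k)_q lifted MRD code as a subset. Then #C ≤ q^{(v−k)(k−d/2+1)} + A_q(v−k, 2(d−k); d/2). -/
open Module
open Matrix

/-- The subspace of `F_q^v` of vectors whose first `k` coordinates vanish
(denoted `Γ` in the paper); its complement (as a set of vectors) is `Δ`. -/
def Gamma (K : Type) [Field K] (k v : ℕ) : Submodule K (Fin v → K) where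
  carrier := {x | ∀ j : Fin v, (j : ℕ) < k → x j = 0}
  add_mem' := by
    intro a b ha hb j hj
    simp [ha j hj, hb j hj]
  zero_mem' := by
    intro j hj
    rfl
  smul_mem' := by
    intro c x hx j hj
    simp [hx j hj]

/-- The subspace distance `d_S(U,W) = dim(U+W) - dim(U ∩ W)`. -/
noncomputable def sDist {K : Type} [Field K] {v : ℕ}
    (U W : Submodule K (Fin v → K)) : ℕ :=
  finrank K ↥(U ⊔ W) - finrank K ↥(U ⊓ W)

/-- A constant dimension code of dimension `k` and minimum subspace distance `d`. -/
def IsCDC (K : Type) [Field K] (v : ℕ) (d k : ℤ)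
    (C : Set (Submodule K (Fin v → K))) : Prop :=
  (∀ U ∈ C, (finrank K U : ℤ) = k) ∧
  ∀ U ∈ C, ∀ W ∈ C, U ≠ W → d ≤ (sDist U W : ℤ)

/-- `A_q(v,d;k)`: the maximum cardinality of a `(v,M,d;k)_q` CDC. -/
noncomputable def Amax (K : Type) [Field K] (v : ℕ) (d k : ℤ) : ℕ :=
  sSup {n | ∃ C : Set (Submodule K (Fin v → K)), IsCDC K v d k C ∧ C.ncard = n}

/-- Row `i` of the `k × v` matrix `(I_k | A)`. -/
def liftRow {K : Type} [Field K] {k v : ℕ} (A : Matrix (Fin k) (Fin (v - k)) K)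
    (i : Fin k) : Fin v → K := fun j =>
  if (j : ℕ) < k then (if (i : ℕ) = (j : ℕ) then 1 else 0)
  else if h2 : (j : ℕ) - k < v - k then A i ⟨(j : ℕ) - k, h2⟩ else 0

/-- `M` is a `(v,d;k)_q` lifted MRD code: `M = { rowspan (I_k | A) : A ∈ R }`
for a `[k × (v-k), q^((v-k)(k-d/2+1)), d/2]_q` rank metric code `R`. -/
def IsLMRD (q : ℕ) (K : Type) [Field K] (v d k : ℕ)
    (M : Set (Submodule K (Fin v → K))) : Prop :=
  ∃ R : Set (Matrix (Fin k) (Fin (v - k)) K),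
    R.ncard = q ^ ((v - k) * (k - d / 2 + 1)) ∧
    (∀ A ∈ R, ∀ B ∈ R, A ≠ B → d / 2 ≤ (A - B).rank) ∧
    M = {U | ∃ A ∈ R, U = Submodule.span K (Set.range (liftRow A))}

/-- The Gaussian binomial coefficient `[a choose b]_q`, defined to be `0`
unless `0 ≤ b ≤ a`. -/
noncomputable def qBin (q : ℕ) (a b : ℤ) : ℚ :=
  if 0 ≤ b ∧ b ≤ a then
    ∏ i ∈ Finset.range b.toNat,
      ((q : ℚ) ^ a - (q : ℚ) ^ (i : ℤ)) / ((q : ℚ) ^ b - (q : ℚ) ^ (i : ℤ))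
  else 0

/-- `[[w, u; c]]_q = q^(u*c) * [w-u choose c]_q` for `0 ≤ c ≤ w-u`, else `0`. -/
noncomputable def qBinD (q : ℕ) (w u c : ℤ) : ℚ :=
  if 0 ≤ c ∧ c ≤ w - u then (q : ℚ) ^ (u * c) * qBin q (w - u) c else 0

section Aux

variable {K : Type} [Field K] {k v : ℕ}

/-- Projection onto the first `k` coordinates. -/
def headMap (K : Type) [Field K] {k v : ℕ} (h : k ≤ v) :
    (Fin v → K) →ₗ[K] (Fin k → K) where
  toFun y := fun i => y (Fin.castLE h i)
  map_add' _ _ := rfl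
  map_smul' _ _ := rfl

/-- Projection onto the last `v - k` coordinates. -/
def tailMap (K : Type) [Field K] {k v : ℕ} (h : k ≤ v) :
    (Fin v → K) →ₗ[K] (Fin (v - k) → K) where
  toFun y := fun j => y ⟨k + (j : ℕ), by have := j.isLt; omega⟩
  map_add' _ _ := rfl
  map_smul' _ _ := rfl

/-- The linear map `x ↦ (x | x ⬝ A)`. -/
def liftMap {K : Type} [Field K] {k v : ℕ} (A : Matrix (Fin k) (Fin (v - k)) K) :
    (Fin k → K) →ₗ[K] (Fin v → K) where
  toFun x := fun j =>
    if h : (j : ℕ) < k then x ⟨j, h⟩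
    else if h2 : (j : ℕ) - k < v - k then (x ᵥ* A) ⟨(j : ℕ) - k, h2⟩ else 0
  map_add' x y := by
    funext j
    simp only [Pi.add_apply, Matrix.add_vecMul]
    split_ifs <;> simp
  map_smul' c x := by
    funext j
    simp only [Pi.smul_apply, Matrix.smul_vecMul, RingHom.id_apply]
    split_ifs <;> simp

lemma head_liftMap (h : k ≤ v) (A : Matrix (Fin k) (Fin (v - k)) K) (x : Fin k → K) :
    headMap K h (liftMap A x) = x := by
  funext i
  have hi : ((Fin.castLE h i : Fin v) : ℕ) < k := i.isLt
  show liftMap A x (Fin.castLE h i) = x i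
  simp only [liftMap, LinearMap.coe_mk, AddHom.coe_mk, dif_pos hi]
  congr 1

lemma tail_liftMap (h : k ≤ v) (A : Matrix (Fin k) (Fin (v - k)) K) (x : Fin k → K) :
    tailMap K h (liftMap A x) = x ᵥ* A := by
  funext j
  have hj := j.isLt
  have h1 : ¬ (k + (j : ℕ) < k) := by omega
  have h2 : k + (j : ℕ) - k < v - k := by omega
  show liftMap A x ⟨k + (j : ℕ), by omega⟩ = (x ᵥ* A) j
  simp only [liftMap, LinearMap.coe_mk, AddHom.coe_mk, dif_neg h1, dif_pos h2]
  congr 1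
  have : k + (j : ℕ) - k = (j : ℕ) := by omega
  exact Fin.ext this

lemma liftMap_injective (h : k ≤ v) (A : Matrix (Fin k) (Fin (v - k)) K) :
    Function.Injective (liftMap A (K := K)) :=
  Function.LeftInverse.injective (g := headMap K h) (head_liftMap h A)

lemma ext_head_tail (h : k ≤ v) {y z : Fin v → K}
    (h1 : headMap K h y = headMap K h z) (h2 : tailMap K h y = tailMap K h z) : y = z := by
  funext j
  by_cases hj : (j : ℕ) < k
  · have := congrFun h1 ⟨(j : ℕ), hj⟩
    simpa [headMap, Fin.castLE] using this
  · have hj2 : (j : ℕ) - k < v - k := by have := j.isLt; omega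
    have := congrFun h2 ⟨(j : ℕ) - k, hj2⟩
    simp only [tailMap, LinearMap.coe_mk, AddHom.coe_mk] at this
    have he : (⟨k + ((j : ℕ) - k), by have := j.isLt; omega⟩ : Fin v) = j :=
      Fin.ext (by simp; omega)
    rwa [he] at this

lemma liftRow_eq (h : k ≤ v) (A : Matrix (Fin k) (Fin (v - k)) K) (i : Fin k) :
    liftRow A i = liftMap A (Pi.single i 1) := by
  funext j
  simp only [liftRow, liftMap, LinearMap.coe_mk, AddHom.coe_mk, Matrix.single_vecMul, one_mul]
  split_ifs with hj hj2
  · rw [Pi.single_apply, if_pos (show (⟨(j : ℕ), hj⟩ : Fin k) = i from Fin.ext hj2.symm)]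
  · rw [Pi.single_apply, if_neg (show ¬(⟨(j : ℕ), hj⟩ : Fin k) = i from
      fun he => hj2 ((congrArg Fin.val he).symm))]
  · simp [Matrix.single_vecMul]
  · rfl

lemma span_liftRow_eq (h : k ≤ v) (A : Matrix (Fin k) (Fin (v - k)) K) :
    Submodule.span K (Set.range (liftRow A)) = LinearMap.range (liftMap A) := by
  apply le_antisymm
  · rw [Submodule.span_le]
    rintro _ ⟨i, rfl⟩
    exact ⟨Pi.single i 1, (liftRow_eq h A i).symm⟩
  · rintro _ ⟨x, rfl⟩
    have hx : ∑ i : Fin k, Pi.single i (x i) = x := Finset.univ_sum_single x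
    have hsingle : ∀ i : Fin k, Pi.single i (x i) = x i • (Pi.single i (1 : K) : Fin k → K) := by
      intro i; funext j
      by_cases hij : j = i <;> simp [Pi.single_apply, hij]
    have : liftMap A x = ∑ i : Fin k, x i • liftMap A (Pi.single i 1) := by
      conv_lhs => rw [← hx]
      rw [map_sum]
      refine Finset.sum_congr rfl fun i _ => ?_
      rw [hsingle i, LinearMap.map_smul]
    rw [this]
    exact Submodule.sum_mem _ fun i _ => Submodule.smul_mem _ _
      (Submodule.subset_span ⟨i, liftRow_eq h A i⟩)

lemma mem_range_liftMap (h : k ≤ v) (A : Matrix (Fin k) (Fin (v - k)) K)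
    {y : Fin v → K} :
    y ∈ LinearMap.range (liftMap A) ↔ liftMap A (headMap K h y) = y := by
  constructor
  · rintro ⟨x, rfl⟩
    rw [head_liftMap h]
  · intro hy
    exact ⟨_, hy⟩

lemma finrank_map_add_finrank_inf_ker {V W : Type} [AddCommGroup V] [Module K V]
    [AddCommGroup W] [Module K W] [FiniteDimensional K V]
    (f : V →ₗ[K] W) (p : Submodule K V) :
    finrank K ↥(p.map f) + finrank K ↥(p ⊓ LinearMap.ker f) = finrank K ↥p := by
  have h := LinearMap.finrank_range_add_finrank_ker (f.domRestrict p)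
  rw [LinearMap.range_domRestrict, LinearMap.ker_domRestrict] at h
  have he : (LinearMap.ker f).comap p.subtype = (p ⊓ LinearMap.ker f).comap p.subtype := by
    rw [Submodule.comap_inf, Submodule.comap_subtype_self, top_inf_eq]
  rw [he, (Submodule.comapSubtypeEquivOfLe (inf_le_left :
    p ⊓ LinearMap.ker f ≤ p)).finrank_eq] at h
  exact h

lemma exists_le_finrank_eq {V : Type} [AddCommGroup V] [Module K V] [FiniteDimensional K V]
    (p : Submodule K V) (n : ℕ) (hn : n ≤ finrank K ↥p) :
    ∃ X : Submodule K V, X ≤ p ∧ finrank K ↥X = n := by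
  let b := Module.finBasis K ↥p
  let y : Fin n → V := fun i => (b (Fin.castLE hn i) : V)
  have hli : LinearIndependent K y :=
    (b.linearIndependent.map' p.subtype (Submodule.ker_subtype p)).comp _
      (Fin.castLE_injective hn)
  refine ⟨Submodule.span K (Set.range y), ?_, ?_⟩
  · rw [Submodule.span_le]
    rintro _ ⟨i, rfl⟩
    exact (b (Fin.castLE hn i)).2
  · rw [finrank_span_eq_card hli, Fintype.card_fin]

end Aux


section GammaAux

variable {K : Type} [Field K] {k v : ℕ}

lemma mem_Gamma_iff {y : Fin v → K} :
    y ∈ Gamma K k v ↔ ∀ j : Fin v, (j : ℕ) < k → y j = 0 := Iff.rfl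

lemma Gamma_eq_ker (h : k ≤ v) : Gamma K k v = LinearMap.ker (headMap K h) := by
  ext y
  rw [mem_Gamma_iff, LinearMap.mem_ker]
  constructor
  · intro hy
    funext i
    exact hy (Fin.castLE h i) i.isLt
  · intro hy j hj
    have := congrFun hy ⟨(j : ℕ), hj⟩
    have he : Fin.castLE h (⟨(j : ℕ), hj⟩ : Fin k) = j := Fin.ext rfl
    simpa [headMap, he] using this

lemma eq_zero_of_gamma (h : k ≤ v) {y : Fin v → K} (hy : y ∈ Gamma K k v)
    (hty : tailMap K h y = 0) : y = 0 := by
  apply ext_head_tail h (z := (0 : Fin v → K))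
  · rw [map_zero]
    rw [Gamma_eq_ker h] at hy
    exact LinearMap.mem_ker.mp hy
  · rw [hty, map_zero]

end GammaAux

/-- for `k < d`, a CDC containing an LMRD has cardinality at most
`q^((v-k)(k-d/2+1)) + A_q(v-k, 2(d-k); d/2)`. -/
theorem stmt5 (q : ℕ) (K : Type) [Field K] [Fintype K] (hq : Fintype.card K = q)
    (v d k : ℕ) (hd : Even d) (hd2 : 2 ≤ d / 2) (hdk : d / 2 ≤ k) (hkv : 2 * k ≤ v)
    (hkd : k < d)
    (C M : Set (Submodule K (Fin v → K)))
    (hC : IsCDC K v (d : ℤ) (k : ℤ) C) (hM : IsLMRD q K v d k M) (hMC : M ⊆ C) :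
    C.ncard ≤ q ^ ((v - k) * (k - d / 2 + 1))
      + Amax K (v - k) (2 * ((d : ℤ) - (k : ℤ))) ((d / 2 : ℕ) : ℤ) := by
  classical
  obtain ⟨R, hR1, hR2, hR3⟩ := hM
  have hkv' : k ≤ v := by omega
  set δ := d / 2 with hδdef
  obtain ⟨r, hr⟩ := hd
  have hdd : d = 2 * δ := by omega
  have hδk : δ ≤ k := hdk
  have hkd' : k < 2 * δ := by omega
  set s : ℕ := k - δ + 1 with hsdef
  -- the lifted MRD code as an image
  have hMeq : M = (fun A => LinearMap.range (liftMap A)) '' R := by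
    rw [hR3]
    ext U
    constructor
    · rintro ⟨A, hA, rfl⟩
      exact ⟨A, hA, (span_liftRow_eq hkv' A).symm⟩
    · rintro ⟨A, hA, rfl⟩
      exact ⟨A, hA, (span_liftRow_eq hkv' A).symm⟩
  have hWinj : Function.Injective
      (fun A : Matrix (Fin k) (Fin (v - k)) K => LinearMap.range (liftMap A)) := by
    intro A B hAB
    apply Matrix.ext
    intro i j
    have hAB' : LinearMap.range (liftMap A) = LinearMap.range (liftMap B) := hAB
    have hrow : liftMap A (Pi.single i 1) ∈ LinearMap.range (liftMap B) := by
      rw [← hAB']; exact ⟨_, rfl⟩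
    have h1 := (mem_range_liftMap hkv' B).mp hrow
    rw [head_liftMap hkv'] at h1
    have h2 := congrArg (tailMap K hkv') h1
    rw [tail_liftMap hkv', tail_liftMap hkv'] at h2
    have h3 := congrFun h2 j
    simpa [Matrix.single_vecMul] using h3.symm
  have hMcard : M.ncard = q ^ ((v - k) * s) := by
    rw [hMeq, Set.ncard_image_of_injective R hWinj, hR1]
  have hCdim : ∀ U ∈ C, finrank K ↥U = k := by
    intro U hU
    exact_mod_cast hC.1 U hU
  have hdist : ∀ U ∈ C, ∀ W ∈ C, U ≠ W →
      (finrank K ↥(U ⊓ W) : ℤ) ≤ (k : ℤ) - (δ : ℤ) := by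
    intro U hU W hW hne
    have h1 := hC.2 U hU W hW hne
    have h2 : finrank K ↥(U ⊔ W) + finrank K ↥(U ⊓ W)
        = finrank K ↥U + finrank K ↥W := Submodule.finrank_sup_add_finrank_inf_eq U W
    have hle : finrank K ↥(U ⊓ W) ≤ finrank K ↥(U ⊔ W) :=
      Submodule.finrank_mono (le_trans inf_le_left le_sup_left)
    simp only [sDist] at h1
    rw [Nat.cast_sub hle] at h1
    have e1 := hCdim U hU
    have e2 := hCdim W hW
    omega
  -- Step 1: every codeword outside M meets Gamma in dimension at least δ
  have key1 : ∀ U ∈ C, U ∉ M → δ ≤ finrank K ↥(U ⊓ Gamma K k v) := by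
    intro U hU hUM
    by_contra hlt
    push_neg at hlt
    have hmap : finrank K ↥(Submodule.map (headMap K hkv') U)
        + finrank K ↥(U ⊓ Gamma K k v) = finrank K ↥U := by
      have := finrank_map_add_finrank_inf_ker (headMap K hkv') U
      rwa [← Gamma_eq_ker hkv'] at this
    have hs' : s ≤ finrank K ↥(Submodule.map (headMap K hkv') U) := by
      have := hCdim U hU
      omega
    set P := Submodule.map (headMap K hkv') U with hPdef
    let b := Module.finBasis K ↥P
    set x : Fin s → (Fin k → K) := fun i => (b (Fin.castLE hs' i) : Fin k → K) with hxdef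
    have hxli : LinearIndependent K x :=
      (b.linearIndependent.map' P.subtype (Submodule.ker_subtype P)).comp _
        (Fin.castLE_injective hs')
    have hpre : ∀ i : Fin s, ∃ u, u ∈ U ∧ headMap K hkv' u = x i := by
      intro i
      rcases Submodule.mem_map.mp (b (Fin.castLE hs' i)).2 with ⟨w, hw, he⟩
      exact ⟨w, hw, he⟩
    choose u hu hux using hpre
    have huli : LinearIndependent K u := by
      have hco : x = (headMap K hkv') ∘ u := funext fun i => (hux i).symm
      exact LinearIndependent.of_comp (headMap K hkv') (hco ▸ hxli)
    set T : Matrix (Fin k) (Fin (v - k)) K → (Fin s → Fin (v - k) → K) :=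
      fun A => fun i => tailMap K hkv' (u i) - x i ᵥ* A with hTdef
    have hTinj : Set.InjOn T R := by
      intro A hA B hB hAB
      by_contra hne
      have hrk := hR2 A hA B hB hne
      have hxker : ∀ i, x i ᵥ* (A - B) = 0 := by
        intro i
        have h0 := congrFun hAB i
        simp only [hTdef] at h0
        rw [sub_right_inj] at h0
        rw [Matrix.vecMul_sub, h0, sub_self]
      have hspan : Submodule.span K (Set.range x) ≤ LinearMap.ker (A - B).vecMulLinear := by
        rw [Submodule.span_le]
        rintro _ ⟨i, rfl⟩
        exact LinearMap.mem_ker.mpr (hxker i)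
      have h4 : s ≤ finrank K ↥(LinearMap.ker (A - B).vecMulLinear) := by
        calc s = finrank K ↥(Submodule.span K (Set.range x)) := by
              rw [finrank_span_eq_card hxli, Fintype.card_fin]
          _ ≤ _ := Submodule.finrank_mono hspan
      have h5 : finrank K ↥(LinearMap.range (A - B).vecMulLinear)
          + finrank K ↥(LinearMap.ker (A - B).vecMulLinear) = k := by
        rw [LinearMap.finrank_range_add_finrank_ker, Module.finrank_pi, Fintype.card_fin]
      have h6 : (A - B).rank ≤ finrank K ↥(LinearMap.range (A - B).vecMulLinear) := by
        have e1 : (A - B).rank = (A - B)ᵀ.rank := (Matrix.rank_transpose _).symm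
        have e2 : (A - B)ᵀ.rank
            = finrank K ↥(LinearMap.range ((A - B)ᵀ).mulVecLin) := rfl
        rw [e1, e2, Matrix.mulVecLin_transpose]
      omega
    have hRfin : R.Finite := Set.toFinite R
    haveI := hRfin.fintype
    have hcardR : Fintype.card ↥R = q ^ ((v - k) * s) := by
      rw [← Nat.card_eq_fintype_card, Nat.card_coe_set_eq, hR1]
    have hcardT : Fintype.card (Fin s → Fin (v - k) → K) = q ^ ((v - k) * s) := by
      rw [Fintype.card_fun, Fintype.card_fun, hq, Fintype.card_fin, Fintype.card_fin, pow_mul]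
    have hbij : Function.Bijective (fun a : ↥R => T (a : Matrix (Fin k) (Fin (v - k)) K)) := by
      rw [Fintype.bijective_iff_injective_and_card]
      constructor
      · intro a b hab
        exact Subtype.ext (hTinj a.2 b.2 hab)
      · rw [hcardR, hcardT]
    obtain ⟨⟨A, hA⟩, hTA⟩ := hbij.2 0
    have hTA' : T A = 0 := hTA
    have hmemW : ∀ i : Fin s, u i ∈ LinearMap.range (liftMap A) := by
      intro i
      refine ⟨x i, ?_⟩
      have h9 : tailMap K hkv' (u i) - x i ᵥ* A = 0 := by
        have := congrFun hTA' i
        simpa [hTdef] using this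
      apply ext_head_tail hkv'
      · rw [head_liftMap hkv', hux i]
      · rw [tail_liftMap hkv']
        have := sub_eq_zero.mp h9
        exact this.symm
    have hWC : LinearMap.range (liftMap A) ∈ C := hMC (by rw [hMeq]; exact ⟨A, hA, rfl⟩)
    have hUW : U ≠ LinearMap.range (liftMap A) := by
      intro he
      apply hUM
      rw [hMeq, he]
      exact ⟨A, hA, rfl⟩
    have hsub2 : Submodule.span K (Set.range u) ≤ U ⊓ LinearMap.range (liftMap A) := by
      rw [Submodule.span_le]
      rintro _ ⟨i, rfl⟩
      exact ⟨hu i, hmemW i⟩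
    have h7 : s ≤ finrank K ↥(U ⊓ LinearMap.range (liftMap A)) := by
      calc s = finrank K ↥(Submodule.span K (Set.range u)) := by
            rw [finrank_span_eq_card huli, Fintype.card_fin]
        _ ≤ _ := Submodule.finrank_mono hsub2
    have h8 := hdist U hU _ hWC hUW
    omega
  -- Step 2: project to the last v - k coordinates
  have hτrank : ∀ p : Submodule K (Fin v → K), p ≤ Gamma K k v →
      finrank K ↥(Submodule.map (tailMap K hkv') p) = finrank K ↥p := by
    intro p hp
    have h1 := finrank_map_add_finrank_inf_ker (tailMap K hkv') p
    have h2 : p ⊓ LinearMap.ker (tailMap K hkv') = ⊥ := by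
      rw [Submodule.eq_bot_iff]
      rintro y ⟨hy1, hy2⟩
      exact eq_zero_of_gamma hkv' (hp hy1) (LinearMap.mem_ker.mp hy2)
    rw [h2] at h1
    simpa using h1
  have hτint : ∀ p p' : Submodule K (Fin v → K), p ≤ Gamma K k v → p' ≤ Gamma K k v →
      Submodule.map (tailMap K hkv') p ⊓ Submodule.map (tailMap K hkv') p' ≤
        Submodule.map (tailMap K hkv') (p ⊓ p') := by
    rintro p p' hp hp' z ⟨hz1, hz2⟩
    obtain ⟨y, hy, hyz⟩ := Submodule.mem_map.mp hz1
    obtain ⟨y', hy', hy'z⟩ := Submodule.mem_map.mp hz2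
    have h0 : y - y' = 0 := by
      apply eq_zero_of_gamma hkv' (Submodule.sub_mem _ (hp hy) (hp' hy'))
      rw [map_sub, hyz, hy'z, sub_self]
    have hyy' : y = y' := sub_eq_zero.mp h0
    exact Submodule.mem_map.mpr ⟨y, ⟨hy, hyy' ▸ hy'⟩, hyz⟩
  have hex : ∀ U : Submodule K (Fin v → K), ∃ X : Submodule K (Fin (v - k) → K),
      U ∈ C \ M → X ≤ Submodule.map (tailMap K hkv') (U ⊓ Gamma K k v)
        ∧ finrank K ↥X = δ := by
    intro U
    by_cases hU : U ∈ C \ M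
    · have h1 : δ ≤ finrank K ↥(Submodule.map (tailMap K hkv') (U ⊓ Gamma K k v)) := by
        rw [hτrank _ inf_le_right]
        exact key1 U hU.1 hU.2
      obtain ⟨Y, hY1, hY2⟩ := exists_le_finrank_eq _ δ h1
      exact ⟨Y, fun _ => ⟨hY1, hY2⟩⟩
    · exact ⟨⊥, fun h => absurd h hU⟩
  choose X hX using hex
  have hXint : ∀ U ∈ C \ M, ∀ U' ∈ C \ M,
      finrank K ↥(X U ⊓ X U') ≤ finrank K ↥(U ⊓ U') := by
    intro U hU U' hU'
    have h1 : X U ⊓ X U' ≤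
        Submodule.map (tailMap K hkv') ((U ⊓ Gamma K k v) ⊓ (U' ⊓ Gamma K k v)) :=
      le_trans (inf_le_inf (hX U hU).1 (hX U' hU').1)
        (hτint _ _ inf_le_right inf_le_right)
    calc finrank K ↥(X U ⊓ X U')
        ≤ finrank K ↥(Submodule.map (tailMap K hkv')
            ((U ⊓ Gamma K k v) ⊓ (U' ⊓ Gamma K k v))) := Submodule.finrank_mono h1
      _ = finrank K ↥((U ⊓ Gamma K k v) ⊓ (U' ⊓ Gamma K k v)) :=
          hτrank _ (le_trans inf_le_left inf_le_right)
      _ ≤ finrank K ↥(U ⊓ U') :=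
          Submodule.finrank_mono (inf_le_inf inf_le_left inf_le_left)
  have hXinj : Set.InjOn X (C \ M) := by
    intro U hU U' hU' hXe
    by_contra hne
    have h1 := hXint U hU U' hU'
    have h2 := hdist U hU.1 U' hU'.1 hne
    have h3 : finrank K ↥(X U ⊓ X U') = δ := by
      rw [hXe, inf_idem]
      exact (hX U' hU').2
    omega
  have hD : IsCDC K (v - k) (2 * ((d : ℤ) - (k : ℤ))) ((δ : ℕ) : ℤ) (X '' (C \ M)) := by
    constructor
    · rintro _ ⟨U, hU, rfl⟩
      exact_mod_cast congrArg (Nat.cast (R := ℤ)) (hX U hU).2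
    · rintro _ ⟨U, hU, rfl⟩ _ ⟨U', hU', rfl⟩ hne
      have hUU' : U ≠ U' := fun he => hne (by rw [he])
      have h1 := hXint U hU U' hU'
      have h2 := hdist U hU.1 U' hU'.1 hUU'
      have h3 : finrank K ↥(X U ⊔ X U') + finrank K ↥(X U ⊓ X U')
          = finrank K ↥(X U) + finrank K ↥(X U') :=
        Submodule.finrank_sup_add_finrank_inf_eq _ _
      have hle : finrank K ↥(X U ⊓ X U') ≤ finrank K ↥(X U ⊔ X U') :=
        Submodule.finrank_mono (le_trans inf_le_left le_sup_left)
      have e1 := (hX U hU).2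
      have e2 := (hX U' hU').2
      simp only [sDist]
      rw [Nat.cast_sub hle]
      omega
  have hDcard : (X '' (C \ M)).ncard = (C \ M).ncard := Set.ncard_image_of_injOn hXinj
  haveI hfin2 : Finite (Submodule K (Fin (v - k) → K)) :=
    Finite.of_injective _ (SetLike.coe_injective (A := Submodule K (Fin (v - k) → K)))
  have hbdd : BddAbove {n | ∃ C' : Set (Submodule K (Fin (v - k) → K)),
      IsCDC K (v - k) (2 * ((d : ℤ) - (k : ℤ))) ((δ : ℕ) : ℤ) C' ∧ C'.ncard = n} := by
    refine ⟨Nat.card (Submodule K (Fin (v - k) → K)), ?_⟩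
    rintro n ⟨C', _, rfl⟩
    rw [← Set.ncard_univ]
    exact Set.ncard_le_ncard (Set.subset_univ _) (Set.toFinite _)
  have hAmax : (C \ M).ncard ≤ Amax K (v - k) (2 * ((d : ℤ) - (k : ℤ))) ((δ : ℕ) : ℤ) := by
    rw [← hDcard]
    exact le_csSup hbdd ⟨_, hD, rfl⟩
  haveI hfin1 : Finite (Submodule K (Fin v → K)) :=
    Finite.of_injective _ (SetLike.coe_injective (A := Submodule K (Fin v → K)))
  have hsplit : (C \ M).ncard + M.ncard = C.ncard :=
    Set.ncard_diff_add_ncard_of_subset hMC (Set.toFinite C)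
  omega
end

section
/- Let q be a prime power and let v, d, k be integers with d even and 2 ≤ d/2 ≤ k ≤ v/2. Let C be a (v,#C,d;k)_q constant dimension code that contains a (v,d;k)_q lifted MRD code M; for d/2 ≤ t ≤ k set S_t = { U ∈ C : dim(U ∩ Γ) = t }, and for a subspace Y of Γ set N_{t,Y} = { U ∈ S_t : Y ⊆ U }. Let c and y be integers with 0 ≤ y ≤ k and k − d/2 + 1 ≤ c + y. Then for every y-dimensional subspace Y of Γ: Σ_{t=d/2}^{k−c} #N_{t,Y} · [[k, t; c]]_q ≤ [[v, v−k; c]]_q. -/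
open Module

theorem count_tuples_aux {K V : Type*} [Field K] [Fintype K] [AddCommGroup V] [Module K V]
    [FiniteDimensional K V] [Finite V] (G W : Submodule K V) (c : ℕ)
    (hc : c + finrank K ↥(W ⊓ G) ≤ finrank K ↥W) :
    Nat.card {f : Fin c → V | (∀ i, f i ∈ W) ∧ LinearIndependent K (G.mkQ ∘ f)} =
      Fintype.card K ^ (finrank K ↥(W ⊓ G) * c) *
        ∏ i ∈ Finset.range c,
          (Fintype.card K ^ (finrank K ↥W - finrank K ↥(W ⊓ G)) - Fintype.card K ^ i) := by
  classical
  haveI : Finite (V ⧸ G) := Quotient.finite _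
  set q := Fintype.card K with hqdef
  set t := finrank K ↥(W ⊓ G) with ht
  set π := G.mkQ with hπ
  set πW : ↥W →ₗ[K] V ⧸ G := π.comp W.subtype with hπW
  have hkerW : LinearMap.ker πW = Submodule.comap W.subtype (W ⊓ G) := by
    rw [hπW, LinearMap.ker_comp, hπ, Submodule.ker_mkQ, Submodule.comap_inf,
      Submodule.comap_subtype_self, top_inf_eq]
  have hkfin : finrank K (LinearMap.ker πW) = t := by
    rw [ht]
    exact LinearEquiv.finrank_eq (hkerW ▸ Submodule.comapSubtypeEquivOfLe inf_le_left)
  have hrange : finrank K ↥(LinearMap.range πW) = finrank K ↥W - t := by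
    have := LinearMap.finrank_range_add_finrank_ker πW
    omega
  set πc : ↥W →ₗ[K] ↥(LinearMap.range πW) := πW.rangeRestrict with hπc
  obtain ⟨s, hs⟩ := πc.exists_rightInverse_of_surjective
    (LinearMap.range_eq_top.2 πW.surjective_rangeRestrict)
  have hsapp : ∀ x, πc (s x) = x := fun x => LinearMap.ext_iff.1 hs x
  have hcoe : ∀ x : ↥W, ((πc x : ↥(LinearMap.range πW)) : V ⧸ G) = π (x : V) := fun x => rfl
  let e : {f : Fin c → V | (∀ i, f i ∈ W) ∧ LinearIndependent K (π ∘ f)} ≃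
      ({g : Fin c → ↥(LinearMap.range πW) // LinearIndependent K g} ×
        (Fin c → ↥(LinearMap.ker πc))) :=
    { toFun := fun f =>
        (⟨fun i => πc ⟨f.1 i, f.2.1 i⟩, by
            have h := f.2.2
            have heq : π ∘ f.1 =
                (LinearMap.range πW).subtype ∘ fun i => πc ⟨f.1 i, f.2.1 i⟩ := rfl
            rw [heq] at h
            exact h.of_comp _⟩,
         fun i => ⟨⟨f.1 i, f.2.1 i⟩ - s (πc ⟨f.1 i, f.2.1 i⟩), by
            simp [LinearMap.mem_ker, map_sub, hsapp]⟩),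
      invFun := fun gh =>
        ⟨fun i => ((s (gh.1.1 i) + (gh.2 i : ↥W) : ↥W) : V),
         ⟨fun i => (s (gh.1.1 i) + (gh.2 i : ↥W)).2, by
            have heq : π ∘ (fun i => ((s (gh.1.1 i) + (gh.2 i : ↥W) : ↥W) : V)) =
                (LinearMap.range πW).subtype ∘ gh.1.1 := by
              funext i
              show ((πc (s (gh.1.1 i) + (gh.2 i : ↥W)) : ↥(LinearMap.range πW)) : V ⧸ G) = _
              rw [map_add, hsapp, LinearMap.mem_ker.1 (gh.2 i).2, add_zero]
              rfl
            rw [heq]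
            exact gh.1.2.map (by simp [Submodule.ker_subtype, disjoint_bot_right])⟩⟩,
      left_inv := by
        intro f
        apply Subtype.ext
        funext i
        show (((s (πc ⟨f.1 i, f.2.1 i⟩) +
          (⟨f.1 i, f.2.1 i⟩ - s (πc ⟨f.1 i, f.2.1 i⟩))) : ↥W) : V) = f.1 i
        rw [add_sub_cancel]
      right_inv := by
        intro gh
        refine Prod.ext ?_ ?_
        · apply Subtype.ext
          funext i
          show πc (s (gh.1.1 i) + (gh.2 i : ↥W)) = gh.1.1 i
          rw [map_add, hsapp, LinearMap.mem_ker.1 (gh.2 i).2, add_zero]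
        · funext i
          apply Subtype.ext
          show (s (gh.1.1 i) + (gh.2 i : ↥W)) - s (πc (s (gh.1.1 i) + (gh.2 i : ↥W)))
            = (gh.2 i : ↥W)
          rw [map_add, hsapp, LinearMap.mem_ker.1 (gh.2 i).2, add_zero, add_sub_cancel_left] }
  rw [Nat.card_congr e, Nat.card_prod, Nat.card_pi]
  have hkerc : Nat.card ↥(LinearMap.ker πc) = q ^ t := by
    have : Fintype ↥(LinearMap.ker πc) := Fintype.ofFinite _
    rw [Nat.card_eq_fintype_card, card_eq_pow_finrank (K := K), hπc,
      LinearMap.ker_rangeRestrict, hkfin]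
  have hli : Nat.card {g : Fin c → ↥(LinearMap.range πW) // LinearIndependent K g} =
      ∏ i : Fin c, (q ^ (finrank K ↥W - t) - q ^ (i : ℕ)) := by
    rw [card_linearIndependent (by omega), hrange]
  rw [hli, hkerc]
  rw [Finset.prod_const, Finset.card_univ, Fintype.card_fin,
    Fin.prod_univ_eq_prod_range fun j => q ^ (finrank K ↥W - t) - q ^ j, pow_mul]
  ring

theorem finrank_Gamma (K : Type) [Field K] {k v : ℕ} (hkv : k ≤ v) :
    finrank K ↥(Gamma K k v) = v - k := by
  set g : (Fin v → K) →ₗ[K] (Fin k → K) := LinearMap.funLeft K K (Fin.castLE hkv) with hg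
  have hker : LinearMap.ker g = Gamma K k v := by
    ext x
    constructor
    · intro hx j hj
      have := congrFun (LinearMap.mem_ker.1 hx) ⟨(j : ℕ), hj⟩
      simpa [hg, LinearMap.funLeft, Fin.castLE] using this
    · intro hx
      rw [LinearMap.mem_ker]
      funext i
      exact hx (Fin.castLE hkv i) (by simpa using i.2)
  have hsurj : Function.Surjective g :=
    LinearMap.funLeft_surjective_of_injective K K _ (Fin.castLE_injective hkv)
  have h1 := LinearMap.finrank_range_add_finrank_ker g
  rw [LinearMap.range_eq_top.2 hsurj, finrank_top, hker] at h1
  have h2 : finrank K (Fin k → K) = k := by simp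
  have h3 : finrank K (Fin v → K) = v := by simp
  omega

theorem finrank_quot_Gamma (K : Type) [Field K] {k v : ℕ} (hkv : k ≤ v) :
    finrank K ((Fin v → K) ⧸ Gamma K k v) = k := by
  have h := Submodule.finrank_quotient_add_finrank (Gamma K k v)
  rw [finrank_Gamma K hkv] at h
  have h3 : finrank K (Fin v → K) = v := by simp
  omega

theorem qBinD_nonneg {q : ℕ} (hq : 2 ≤ q) (w u c : ℤ) : 0 ≤ qBinD q w u c := by
  have hq1 : (1 : ℚ) ≤ (q : ℚ) := by exact_mod_cast Nat.one_le_of_lt hq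
  have hq0 : (0 : ℚ) < (q : ℚ) := by positivity
  rw [qBinD]
  split_ifs with h
  · apply mul_nonneg (zpow_nonneg (le_of_lt hq0) _)
    rw [qBin, if_pos h]
    apply Finset.prod_nonneg
    intro i hi
    rw [Finset.mem_range] at hi
    have hib : (i : ℤ) < c := by omega
    apply div_nonneg
    · have : (q : ℚ) ^ (i : ℤ) ≤ (q : ℚ) ^ (w - u) :=
        zpow_le_zpow_right₀ hq1 (by omega)
      linarith
    · have : (q : ℚ) ^ (i : ℤ) < (q : ℚ) ^ c :=
        zpow_lt_zpow_right₀ (by exact_mod_cast hq) hib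
      linarith
  · exact le_refl 0

/-- Multiplying `qBinD` by the denominator product gives a natural number. -/
theorem qBinD_mul_D {q : ℕ} (hq : 2 ≤ q) (w u c : ℕ) (hc : c + u ≤ w) :
    qBinD q (w : ℤ) (u : ℤ) (c : ℤ) *
        ∏ i ∈ Finset.range c, ((q : ℚ) ^ c - (q : ℚ) ^ i)
      = ((q ^ (u * c) * ∏ i ∈ Finset.range c, (q ^ (w - u) - q ^ i) : ℕ) : ℚ) := by
  have hq1 : (1 : ℚ) < (q : ℚ) := by exact_mod_cast hq
  have hcond : (0 : ℤ) ≤ (c : ℤ) ∧ (c : ℤ) ≤ (w : ℤ) - (u : ℤ) := by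
    constructor <;> omega
  rw [qBinD, if_pos hcond, qBin, if_pos hcond]
  have htn : ((c : ℤ)).toNat = c := Int.toNat_natCast c
  rw [htn, Nat.cast_mul, Nat.cast_prod, Nat.cast_pow]
  have hwu : ((w : ℤ) - (u : ℤ)) = ((w - u : ℕ) : ℤ) := by push_cast [Nat.cast_sub (by omega : u ≤ w)]; ring
  have hprod : (∏ i ∈ Finset.range c,
        ((q : ℚ) ^ ((w : ℤ) - (u : ℤ)) - (q : ℚ) ^ (i : ℤ)) / ((q : ℚ) ^ (c : ℤ) - (q : ℚ) ^ (i : ℤ))) *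
      ∏ i ∈ Finset.range c, ((q : ℚ) ^ c - (q : ℚ) ^ i) =
      ∏ i ∈ Finset.range c, ((q : ℚ) ^ (w - u : ℕ) - (q : ℚ) ^ i) := by
    rw [← Finset.prod_mul_distrib]
    apply Finset.prod_congr rfl
    intro i hi
    rw [Finset.mem_range] at hi
    have hne : (q : ℚ) ^ (c : ℤ) - (q : ℚ) ^ (i : ℤ) ≠ 0 := by
      have : (q : ℚ) ^ (i : ℤ) < (q : ℚ) ^ (c : ℤ) :=
        zpow_lt_zpow_right₀ hq1 (by exact_mod_cast hi)
      linarith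
    rw [hwu]
    rw [show ((q:ℚ)^(c:ℤ) - (q:ℚ)^(i:ℤ)) = ((q:ℚ)^c - (q:ℚ)^i) by
      rw [zpow_natCast, zpow_natCast]]
    rw [show ((q:ℚ)^((w - u : ℕ):ℤ) - (q:ℚ)^(i:ℤ)) = ((q:ℚ)^(w-u:ℕ) - (q:ℚ)^i) by
      rw [zpow_natCast, zpow_natCast]]
    exact div_mul_cancel₀ _ (by simpa using hne)
  rw [mul_assoc, hprod]
  congr 1
  · apply Finset.prod_congr rfl
    intro i hi
    rw [Finset.mem_range] at hi
    have : (q:ℚ) ^ i ≤ (q:ℚ) ^ (w - u : ℕ) := by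
      apply pow_le_pow_right₀ (le_of_lt hq1)
      omega
    rw [Nat.cast_sub]
    · push_cast; ring
    · apply Nat.pow_le_pow_right (by omega)
      omega

theorem span_range_inf_eq_bot {K V : Type*} [Field K] [AddCommGroup V] [Module K V]
    (G : Submodule K V) {c : ℕ} {f : Fin c → V}
    (hf : LinearIndependent K (G.mkQ ∘ f)) :
    Submodule.span K (Set.range f) ⊓ G = ⊥ := by
  rw [eq_bot_iff]
  intro x hx
  obtain ⟨hx1, hx2⟩ := Submodule.mem_inf.1 hx
  obtain ⟨a, ha⟩ := (Submodule.mem_span_range_iff_exists_fun K).1 hx1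
  have h0 : ∑ i, a i • (G.mkQ ∘ f) i = 0 := by
    have : ∑ i, a i • (G.mkQ ∘ f) i = G.mkQ x := by
      rw [← ha]
      simp [Function.comp, map_sum, map_smul]
    rw [this, Submodule.mkQ_apply, Submodule.Quotient.mk_eq_zero]
    exact hx2
  have hz := Fintype.linearIndependent_iff.1 hf a h0
  have : x = 0 := by
    rw [← ha]
    simp [hz]
  simp [this]


/-- for every `y`-dimensional subspace `Y` of `Γ`,
`Σ_{t=d/2}^{k-c} #N_{t,Y} [[k,t;c]]_q ≤ [[v,v-k;c]]_q`. -/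
theorem stmt8 (q : ℕ) (K : Type) [Field K] [Fintype K] (hq : Fintype.card K = q)
    (v d k : ℕ) (hd : Even d) (hd2 : 2 ≤ d / 2) (hdk : d / 2 ≤ k) (hkv : 2 * k ≤ v)
    (C M : Set (Submodule K (Fin v → K)))
    (hC : IsCDC K v (d : ℤ) (k : ℤ) C) (hM : IsLMRD q K v d k M) (hMC : M ⊆ C)
    (c y : ℤ) (hy0 : 0 ≤ y) (hyk : y ≤ (k : ℤ)) (hcy : (k : ℤ) - (d : ℤ) / 2 + 1 ≤ c + y)
    (Y : Submodule K (Fin v → K)) (hY : Y ≤ Gamma K k v) (hYdim : (finrank K Y : ℤ) = y) :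
    ∑ t ∈ Finset.Icc ((d : ℤ) / 2) ((k : ℤ) - c),
        (({U ∈ C | (finrank K ↥(U ⊓ Gamma K k v) : ℤ) = t ∧ Y ≤ U}).ncard : ℚ)
          * qBinD q (k : ℤ) t c
      ≤ qBinD q (v : ℤ) ((v : ℤ) - (k : ℤ)) c := by
  classical
  have hq2 : 2 ≤ q := by
    rw [← hq]
    exact Fintype.one_lt_card
  -- the half of d
  obtain ⟨e', he'⟩ := hd
  set e : ℕ := d / 2 with hedef
  have hde : d = 2 * e := by omega
  have hdeZ : (d : ℤ) / 2 = (e : ℤ) := by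
    have : (d : ℤ) = 2 * (e : ℤ) := by exact_mod_cast hde
    omega
  by_cases hIcc : (k : ℤ) - c < (d : ℤ) / 2
  · rw [Finset.Icc_eq_empty (not_le.2 hIcc), Finset.sum_empty]
    exact qBinD_nonneg hq2 _ _ _
  push_neg at hIcc
  by_cases hc0 : c < 0
  · have hz : ∀ t ∈ Finset.Icc ((d : ℤ) / 2) ((k : ℤ) - c),
        (({U ∈ C | (finrank K ↥(U ⊓ Gamma K k v) : ℤ) = t ∧ Y ≤ U}).ncard : ℚ)
          * qBinD q (k : ℤ) t c = 0 := by
      intro t ht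
      rw [qBinD, if_neg (by omega), mul_zero]
    rw [Finset.sum_congr rfl hz, Finset.sum_const, smul_zero]
    exact qBinD_nonneg hq2 _ _ _
  push_neg at hc0
  set c' := c.toNat with hc'def
  have hc' : (c' : ℤ) = c := Int.toNat_of_nonneg hc0
  have hkv' : k ≤ v := by omega
  have hck : (c' : ℤ) + (e : ℤ) ≤ (k : ℤ) := by omega
  set Γ := Gamma K k v with hΓdef
  set π := Γ.mkQ with hπdef
  have hΓrank : finrank K ↥Γ = v - k := finrank_Gamma K hkv'
  have hfinU : ∀ U ∈ C, finrank K ↥U = k := by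
    intro U hU
    exact_mod_cast hC.1 U hU
  -- the tuple sets
  set Tup : Submodule K (Fin v → K) → Set (Fin c' → (Fin v → K)) :=
    fun U => {f | (∀ i, f i ∈ U) ∧ LinearIndependent K (π ∘ f)} with hTupdef
  haveI : Finite (Submodule K (Fin v → K)) :=
    Finite.of_injective (fun U => (U : Set (Fin v → K))) SetLike.coe_injective
  set 𝒮 : Set (Submodule K (Fin v → K)) :=
    {U | U ∈ C ∧ Y ≤ U ∧ (d : ℤ) / 2 ≤ (finrank K ↥(U ⊓ Γ) : ℤ) ∧
      (finrank K ↥(U ⊓ Γ) : ℤ) ≤ (k : ℤ) - c} with h𝒮def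
  set Sfin := (Set.toFinite 𝒮).toFinset with hSfindef
  -- disjointness
  have hdisj : ∀ U ∈ 𝒮, ∀ U' ∈ 𝒮, U ≠ U' → Disjoint (Tup U) (Tup U') := by
    intro U hU U' hU' hne
    rw [Set.disjoint_left]
    intro f hf hf'
    exfalso
    have hfli : LinearIndependent K f := hf.2.of_comp π
    have hspan : Submodule.span K (Set.range f) ⊓ Γ = ⊥ := span_range_inf_eq_bot Γ hf.2
    have hZle : Submodule.span K (Set.range f) ⊔ Y ≤ U ⊓ U' := by
      refine le_inf (sup_le (Submodule.span_le.2 ?_) hU.2.1)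
        (sup_le (Submodule.span_le.2 ?_) hU'.2.1)
      · rintro x ⟨i, rfl⟩
        exact hf.1 i
      · rintro x ⟨i, rfl⟩
        exact hf'.1 i
    have hZrank : finrank K ↥(Submodule.span K (Set.range f) ⊔ Y) = c' + finrank K ↥Y := by
      have h1 := Submodule.finrank_sup_add_finrank_inf_eq (Submodule.span K (Set.range f)) Y
      have h2 : Submodule.span K (Set.range f) ⊓ Y = ⊥ := by
        rw [← le_bot_iff, ← hspan]
        exact inf_le_inf_left _ hY
      rw [h2, finrank_bot] at h1
      have h3 : finrank K ↥(Submodule.span K (Set.range f)) = c' := by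
        rw [finrank_span_eq_card hfli, Fintype.card_fin]
      omega
    have hle : finrank K ↥(Submodule.span K (Set.range f) ⊔ Y) ≤ finrank K ↥(U ⊓ U') :=
      Submodule.finrank_mono hZle
    have hUk : finrank K ↥U = k := hfinU U hU.1
    have hU'k : finrank K ↥U' = k := hfinU U' hU'.1
    have hsupinf := Submodule.finrank_sup_add_finrank_inf_eq U U'
    have hdist := hC.2 U hU.1 U' hU'.1 hne
    have hinfle : finrank K ↥(U ⊓ U') ≤ finrank K ↥(U ⊔ U') :=
      Submodule.finrank_mono (le_trans inf_le_left le_sup_left)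
    have hsd : sDist U U' = finrank K ↥(U ⊔ U') - finrank K ↥(U ⊓ U') := rfl
    omega
  -- counting per U
  have hcount : ∀ U ∈ 𝒮, ((Set.toFinite (Tup U)).toFinset).card =
      q ^ (finrank K ↥(U ⊓ Γ) * c') *
        ∏ i ∈ Finset.range c', (q ^ (k - finrank K ↥(U ⊓ Γ)) - q ^ i) := by
    intro U hU
    have hUb := hU.2.2.2
    have hcc : c' + finrank K ↥(U ⊓ Γ) ≤ finrank K ↥U := by
      rw [hfinU U hU.1]
      omega
    have hct := count_tuples_aux Γ U c' hcc
    rw [hq, hfinU U hU.1] at hct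
    rw [← Set.ncard_eq_toFinset_card (Tup U) (Set.toFinite (Tup U)),
      ← Nat.card_coe_set_eq]
    exact hct
  -- total count
  have htotal : ((Set.toFinite (Tup ⊤)).toFinset).card =
      q ^ ((v - k) * c') * ∏ i ∈ Finset.range c', (q ^ k - q ^ i) := by
    have hrt : finrank K ↥(⊤ : Submodule K (Fin v → K)) = v := by
      rw [finrank_top]
      simp
    have hin : finrank K ↥((⊤ : Submodule K (Fin v → K)) ⊓ Γ) = v - k := by
      rw [top_inf_eq, hΓrank]
    have hcc : c' + finrank K ↥((⊤ : Submodule K (Fin v → K)) ⊓ Γ) ≤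
        finrank K ↥(⊤ : Submodule K (Fin v → K)) := by
      rw [hin, hrt]
      omega
    have hct := count_tuples_aux Γ (⊤ : Submodule K (Fin v → K)) c' hcc
    rw [hq, hin, hrt, Nat.sub_sub_self hkv'] at hct
    rw [← Set.ncard_eq_toFinset_card (Tup ⊤) (Set.toFinite (Tup ⊤)),
      ← Nat.card_coe_set_eq]
    exact hct
  -- key nat inequality
  have hkey : ∑ U ∈ Sfin, ((Set.toFinite (Tup U)).toFinset).card ≤
      ((Set.toFinite (Tup ⊤)).toFinset).card := by
    rw [← Finset.card_biUnion]
    · apply Finset.card_le_card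
      intro f hf
      rw [Finset.mem_biUnion] at hf
      obtain ⟨U, hU, hfU⟩ := hf
      rw [Set.Finite.mem_toFinset] at hfU ⊢
      exact ⟨fun i => Submodule.mem_top, hfU.2⟩
    · intro U hU U' hU' hne
      simp only [Function.onFun]
      rw [Set.Finite.disjoint_toFinset]
      exact hdisj U ((Set.Finite.mem_toFinset _).1 hU) U' ((Set.Finite.mem_toFinset _).1 hU') hne
  -- fiberwise decomposition
  set Ncnt : ℤ → ℕ := fun t =>
    q ^ (t.toNat * c') * ∏ i ∈ Finset.range c', (q ^ (k - t.toNat) - q ^ i) with hNcntdef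
  have hmaps : ∀ U ∈ Sfin, (finrank K ↥(U ⊓ Γ) : ℤ) ∈ Finset.Icc ((d : ℤ) / 2) ((k : ℤ) - c) := by
    intro U hU
    rw [Set.Finite.mem_toFinset] at hU
    rw [Finset.mem_Icc]
    exact ⟨hU.2.2.1, hU.2.2.2⟩
  have hsum1 : ∑ t ∈ Finset.Icc ((d : ℤ) / 2) ((k : ℤ) - c),
      ({U ∈ C | (finrank K ↥(U ⊓ Γ) : ℤ) = t ∧ Y ≤ U}).ncard * Ncnt t
      = ∑ U ∈ Sfin, ((Set.toFinite (Tup U)).toFinset).card := by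
    rw [← Finset.sum_fiberwise_of_maps_to hmaps
      (fun U => ((Set.toFinite (Tup U)).toFinset).card)]
    apply Finset.sum_congr rfl
    intro t ht
    rw [Finset.mem_Icc] at ht
    have hset : {U | U ∈ C ∧ (finrank K ↥(U ⊓ Γ) : ℤ) = t ∧ Y ≤ U} =
        ↑(Sfin.filter fun U => (finrank K ↥(U ⊓ Γ) : ℤ) = t) := by
      ext U
      simp only [Set.mem_setOf_eq, Finset.coe_filter, Finset.mem_coe,
        Set.Finite.mem_toFinset, h𝒮def, Set.mem_setOf_eq, hSfindef]
      constructor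
      · rintro ⟨h1, h2, h3⟩
        exact ⟨⟨h1, h3, by omega, by omega⟩, h2⟩
      · rintro ⟨⟨h1, h3, _, _⟩, h2⟩
        exact ⟨h1, h2, h3⟩
    rw [hset, Set.ncard_coe_finset]
    rw [Finset.sum_congr rfl (g := fun U => Ncnt t) (fun U hU => ?_)]
    · rw [Finset.sum_const, smul_eq_mul]
    · rw [Finset.mem_filter] at hU
      have hUS : U ∈ 𝒮 := (Set.Finite.mem_toFinset _).1 hU.1
      rw [hcount U hUS, hNcntdef]
      have : finrank K ↥(U ⊓ Γ) = t.toNat := by omega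
      rw [this]
  -- assemble over ℚ
  set D : ℚ := ∏ i ∈ Finset.range c', ((q : ℚ) ^ c' - (q : ℚ) ^ i) with hDdef
  have hq1 : (1 : ℚ) < (q : ℚ) := by exact_mod_cast hq2
  have hD : 0 < D := by
    apply Finset.prod_pos
    intro i hi
    rw [Finset.mem_range] at hi
    have : (q : ℚ) ^ i < (q : ℚ) ^ c' := by
      apply pow_lt_pow_right₀ hq1 hi
    linarith
  refine le_of_mul_le_mul_right ?_ hD
  rw [Finset.sum_mul]
  have hterm : ∀ t ∈ Finset.Icc ((d : ℤ) / 2) ((k : ℤ) - c),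
      (({U ∈ C | (finrank K ↥(U ⊓ Γ) : ℤ) = t ∧ Y ≤ U}).ncard : ℚ) * qBinD q (k : ℤ) t c * D
      = (((({U ∈ C | (finrank K ↥(U ⊓ Γ) : ℤ) = t ∧ Y ≤ U}).ncard * Ncnt t : ℕ)) : ℚ) := by
    intro t ht
    rw [Finset.mem_Icc] at ht
    have ht0 : 0 ≤ t := by omega
    have htt : ((t.toNat : ℕ) : ℤ) = t := Int.toNat_of_nonneg ht0
    have hcc : c' + t.toNat ≤ k := by omega
    rw [mul_assoc]
    rw [show qBinD q (k : ℤ) t c = qBinD q (k : ℤ) ((t.toNat : ℕ) : ℤ) ((c' : ℕ) : ℤ) by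
      rw [htt, hc']]
    rw [qBinD_mul_D hq2 k t.toNat c' hcc]
    rw [hNcntdef]
    push_cast
    ring
  rw [Finset.sum_congr rfl hterm]
  have hRHS : qBinD q (v : ℤ) ((v : ℤ) - (k : ℤ)) c * D =
      ((q ^ ((v - k) * c') * ∏ i ∈ Finset.range c', (q ^ (v - (v - k)) - q ^ i) : ℕ) : ℚ) := by
    rw [show ((v : ℤ) - (k : ℤ)) = (((v - k : ℕ) : ℕ) : ℤ) by omega,
      show (c : ℤ) = ((c' : ℕ) : ℤ) from hc'.symm]
    exact qBinD_mul_D hq2 v (v - k) c' (by omega)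
  rw [hRHS]
  rw [← Nat.cast_sum]
  rw [Nat.cast_le]
  calc ∑ t ∈ Finset.Icc ((d : ℤ) / 2) ((k : ℤ) - c),
        ({U ∈ C | (finrank K ↥(U ⊓ Γ) : ℤ) = t ∧ Y ≤ U}).ncard * Ncnt t
      = ∑ U ∈ Sfin, ((Set.toFinite (Tup U)).toFinset).card := hsum1
    _ ≤ ((Set.toFinite (Tup ⊤)).toFinset).card := hkey
    _ = q ^ ((v - k) * c') * ∏ i ∈ Finset.range c', (q ^ k - q ^ i) := htotal
    _ = q ^ ((v - k) * c') * ∏ i ∈ Finset.range c', (q ^ (v - (v - k)) - q ^ i) := by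
        rw [Nat.sub_sub_self hkv']
end
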